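/- For n > 0 one has L_n(x,qs,q) = F_{n+1}(x,s,q) + q^n·s·F_{n-1}(x,s,q). -/

import Mathlib

open Finset

noncomputable section

abbrev K : Type := RatFunc ℚ

def q : K := RatFunc.X

def qint (a : K) (m : ℕ) : K := ∑ i ∈ range m, a ^ i

def qfact (a : K) (m : ℕ) : K := ∏ i ∈ range m, qint a (i + 1)

def qbinom (a : K) (n k : ℕ) : K :=
  if k ≤ n then qfact a n / (qfact a k * qfact a (n - k)) else 0

/-- q-Fibonacci polynomials F_n(x,s,q) with base `a`. -/
def qF (a x s : K) : ℕ → K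
  | 0 => 0
  | n + 1 => ∑ k ∈ range (n / 2 + 1),
      a ^ (k * (k + 1) / 2) * qbinom a (n - k) k * s ^ k * x ^ (n - 2 * k)

/-- q-Lucas polynomials L_n(x,s,q) with base `a` (L_0 = 2). -/
def qL (a x s : K) (n : ℕ) : K :=
  if n = 0 then 2 else
  ∑ k ∈ range (n / 2 + 1),
    a ^ (k * (k - 1) / 2) * (qint a n / qint a (n - k)) * qbinom a (n - k) k
      * s ^ k * x ^ (n - 2 * k)

/-- Starred variant: L*_0 = 1, L*_n = L_n for n > 0. -/
def qLs (a x s : K) (n : ℕ) : K := if n = 0 then 1 else qL a x s n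

/-- Rogers-Szegő polynomial. -/
def rs (a x y : K) (m : ℕ) : K := ∑ j ∈ range (m + 1), qbinom a m j * x ^ j * y ^ (m - j)

/-- q-Pochhammer (q;q)_m. -/
def qpoch (a : K) (m : ℕ) : K := ∏ j ∈ range m, (1 - a ^ (j + 1))

lemma qint_ne (m : ℕ) (hm : 0 < m) : qint q m ≠ 0 := by
  have h : qint q m = algebraMap (Polynomial ℚ) K (∑ i ∈ range m, Polynomial.X ^ i) := by
    rw [map_sum]; simp [qint, q, RatFunc.algebraMap_X]
  rw [h]
  apply RatFunc.algebraMap_ne_zero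
  intro hz
  have : (∑ i ∈ range m, (Polynomial.X : Polynomial ℚ) ^ i).coeff 0 = 1 := by
    rw [Polynomial.finset_sum_coeff]
    simp [Polynomial.coeff_X_pow]
    omega
  rw [hz] at this; simp at this

lemma qfact_ne (m : ℕ) : qfact q m ≠ 0 := by
  rw [qfact]
  exact Finset.prod_ne_zero_iff.2 fun i _ => qint_ne _ (Nat.succ_pos i)

lemma qint_add (a b : ℕ) : qint q (a + b) = qint q a + q ^ a * qint q b := by
  rw [qint, Finset.sum_range_add, qint, qint, Finset.mul_sum]
  simp [pow_add]

lemma qfact_succ (a : ℕ) : qfact q (a + 1) = qfact q a * qint q (a + 1) :=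
  Finset.prod_range_succ _ _

lemma key (j mm : ℕ) :
    qint q (2*j+mm+2) / qint q (j+1+mm) * qbinom q (j+1+mm) (j+1)
    = qbinom q (j+1+mm) (j+1) + q^(j+1+mm) * qbinom q (j+mm) j := by
  have h1 : qbinom q (j+1+mm) (j+1)
      = qfact q (j+mm) * qint q (j+mm+1) / ((qfact q j * qint q (j+1)) * qfact q mm) := by
    rw [qbinom, if_pos (by omega), show j+1+mm - (j+1) = mm from by omega,
      show j+1+mm = (j+mm)+1 from by omega, qfact_succ, qfact_succ]
  have h2 : qbinom q (j+mm) j = qfact q (j+mm) / (qfact q j * qfact q mm) := by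
    rw [qbinom, if_pos (by omega), show j+mm - j = mm from by omega]
  have hsplit : qint q (2*j+mm+2) = qint q (j+1+mm) + q^(j+1+mm) * qint q (j+1) := by
    rw [show 2*j+mm+2 = (j+1+mm) + (j+1) from by omega, qint_add]
  have hA' : qint q (j+mm+1) ≠ 0 := qint_ne _ (by omega)
  have hI1 : qint q (j+1) ≠ 0 := qint_ne _ (by omega)
  have hFj : qfact q j ≠ 0 := qfact_ne j
  have hFm : qfact q mm ≠ 0 := qfact_ne mm
  have hAA : qint q (j+1+mm) = qint q (j+mm+1) := by rw [show j+1+mm = j+mm+1 from by omega]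
  rw [h1, h2, hsplit, hAA]
  field_simp

theorem stmt4 (x s : K) (n : ℕ) (hn : 0 < n) :
    qL q x (q * s) n = qF q x s (n + 1) + q ^ n * s * qF q x s (n - 1) := by
  obtain _ | _ | m := n
  · omega
  · norm_num [qL, qF, qbinom, qfact, qint]
  · clear hn
    rw [qL, if_neg (by omega)]
    rw [show m+1+1 = m+2 from by omega, show m+2-1 = m+1 from by omega]
    simp only [qF]
    rw [show (m+2)/2 + 1 = (m/2+1)+1 from by omega,
      Finset.sum_range_succ' (fun k => q ^ (k * (k - 1) / 2) * (qint q (m+2) / qint q (m+2 - k)) *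
        qbinom q (m+2 - k) k * (q*s) ^ k * x ^ (m+2 - 2 * k)),
      Finset.sum_range_succ' (fun k => q ^ (k * (k + 1) / 2) * qbinom q (m+2 - k) k * s ^ k *
        x ^ (m+2 - 2 * k)),
      Finset.mul_sum]
    have h0 : qint q (m+2) / qint q (m+2-0) = 1 := by
      rw [Nat.sub_zero]; exact div_self (qint_ne _ (by omega))
    have hsum : ∑ j ∈ range (m/2+1),
        q ^ ((j+1) * ((j+1) - 1) / 2) * (qint q (m+2) / qint q (m+2 - (j+1))) *
          qbinom q (m+2 - (j+1)) (j+1) * (q*s) ^ (j+1) * x ^ (m+2 - 2 * (j+1))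
        = ∑ j ∈ range (m/2+1),
        (q ^ ((j+1) * ((j+1) + 1) / 2) * qbinom q (m+2 - (j+1)) (j+1) * s ^ (j+1) *
          x ^ (m+2 - 2 * (j+1))
         + q ^ (m+2) * s * (q ^ (j * (j + 1) / 2) * qbinom q (m - j) j * s ^ j * x ^ (m - 2 * j))) := by
      refine Finset.sum_congr rfl fun j hj => ?_
      have hj' : 2 * j ≤ m := by
        have := Finset.mem_range.1 hj
        omega
      obtain ⟨mm, rfl⟩ : ∃ mm, m = 2*j + mm := ⟨m - 2*j, by omega⟩
      rw [show 2*j+mm+2 - (j+1) = j+1+mm from by omega,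
        show 2*j+mm+2 - 2*(j+1) = mm from by omega,
        show 2*j+mm - j = j+mm from by omega,
        show 2*j+mm - 2*j = mm from by omega,
        show (j+1) - 1 = j from by omega,
        show (j+1) * ((j+1)+1) / 2 = (j+1)*j/2 + (j+1) from by
          rw [show (j+1)*((j+1)+1) = (j+1)*j + (j+1)*2 from by ring,
            Nat.add_mul_div_right _ _ (by norm_num)],
        show j * (j+1) / 2 = (j+1)*j/2 from by rw [mul_comm]]
      linear_combination (q ^ ((j+1)*j/2) * (q*s) ^ (j+1) * x ^ mm) * key j mm
    rw [hsum, Finset.sum_add_distrib, h0]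
    ring
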